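/- Let λ be a probability measure (V = 1) and let ρ₀, ρ₁ be densities of mass 1. With the total variation distance d_TV(ρ₀, ρ₁) := (1/2) ∫ |ρ₀ − ρ₁| dλ, the Fisher–Rao distance satisfies d_TV(ρ₀, ρ₁) ≤ d_F(ρ₀, ρ₁) ≤ √(π · d_TV(ρ₀, ρ₁)). (Item 7 of the Proposition in Appendix B, comparing the Fisher–Rao and total variation distances.) -/

import Mathlib

open MeasureTheory Real Set

/-- A density of mass `1`: a measurable nonnegative function with total integral `1`. -/
def IsDensity {X : Type*} [MeasurableSpace X] (lam : Measure X) (ρ : X → ℝ) : Prop :=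
  Measurable ρ ∧ (∀ x, 0 ≤ ρ x) ∧ (∫ x, ρ x ∂lam) = 1

/-- The Fisher–Rao (spherical Hellinger) distance between two probability densities. -/
noncomputable def fisherRaoDist {X : Type*} [MeasurableSpace X] (lam : Measure X)
    (ρ₀ ρ₁ : X → ℝ) : ℝ :=
  Real.arccos (∫ x, Real.sqrt (ρ₀ x * ρ₁ x) ∂lam)

/-- The total variation distance between two probability densities. -/
noncomputable def tvDist {X : Type*} [MeasurableSpace X] (lam : Measure X)
    (ρ₀ ρ₁ : X → ℝ) : ℝ :=
  (1 / 2) * ∫ x, |ρ₀ x - ρ₁ x| ∂lam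

/-- Pure trig inequality: `θ² ≤ π(1 - cos θ)` on `[0, π/2]`. -/
lemma sq_le_pi_mul_one_sub_cos {θ : ℝ} (hθ0 : 0 ≤ θ) (hθ2 : θ ≤ π / 2) :
    θ ^ 2 ≤ π * (1 - Real.cos θ) := by
  have hπ : 0 < π := Real.pi_pos
  have hπ4 : π ≤ 4 := by linarith [Real.pi_le_four]
  have hb0 : 0 ≤ 2 * θ / π := by positivity
  have hb1 : 2 * θ / π ≤ 1 := by rw [div_le_one hπ]; linarith
  have ha' : (0:ℝ) ≤ 1 - 2 * θ / π := by linarith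
  have hmem0 : (0:ℝ) ∈ Icc (0:ℝ) π := Set.mem_Icc.2 ⟨le_rfl, hπ.le⟩
  have hmem4 : (π/4 : ℝ) ∈ Icc (0:ℝ) π := Set.mem_Icc.2 ⟨by positivity, by linarith⟩
  have hconc := strictConcaveOn_sin_Icc.concaveOn.2 hmem0 hmem4
    ha' hb0 (by ring : (1 - 2 * θ / π) + 2 * θ / π = 1)
  simp only [smul_eq_mul, Real.sin_zero, Real.sin_pi_div_four, mul_zero,
    zero_add] at hconc
  rw [show (2 * θ / π) * (π / 4) = θ / 2 by field_simp; ring] at hconc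
  have hs2 : Real.sqrt 2 ^ 2 = 2 := Real.sq_sqrt (by norm_num)
  have hs2' : (0:ℝ) ≤ Real.sqrt 2 := Real.sqrt_nonneg 2
  have hsin : Real.sqrt 2 * θ / π ≤ Real.sin (θ / 2) := by
    calc Real.sqrt 2 * θ / π = 2 * θ / π * (Real.sqrt 2 / 2) := by
          field_simp
    _ ≤ Real.sin (θ / 2) := hconc
  have h6 : Real.sqrt 2 * θ ≤ Real.sin (θ / 2) * π := (div_le_iff₀ hπ).mp hsin
  have h60 : 0 ≤ Real.sqrt 2 * θ := by positivity
  have h7 : (Real.sqrt 2 * θ) * (Real.sqrt 2 * θ) ≤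
      (Real.sin (θ / 2) * π) * (Real.sin (θ / 2) * π) :=
    mul_le_mul h6 h6 h60 (le_trans h60 h6)
  have h7' : 2 * θ ^ 2 ≤ Real.sin (θ / 2) ^ 2 * π ^ 2 := by nlinarith
  -- half angle
  have hcos2 : Real.cos (θ / 2) ^ 2 = 1 / 2 + Real.cos θ / 2 := by
    have := Real.cos_sq (θ / 2)
    rwa [show 2 * (θ / 2) = θ by ring] at this
  have hpyth := Real.sin_sq_add_cos_sq (θ / 2)
  have hhalf : 1 - Real.cos θ = 2 * Real.sin (θ / 2) ^ 2 := by linarith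
  have h8 : π * θ ^ 2 ≤ π * (π * (1 - Real.cos θ)) := by
    rw [hhalf]
    nlinarith [sq_nonneg θ]
  exact le_of_mul_le_mul_left h8 hπ

/-- Key elementary inequality: `arccos s ^ 2 ≤ π * (1 - s)` for `s ∈ [0,1]`. -/
lemma arccos_sq_le_pi_mul {s : ℝ} (h0 : 0 ≤ s) (h1 : s ≤ 1) :
    Real.arccos s ^ 2 ≤ π * (1 - s) := by
  have h := sq_le_pi_mul_one_sub_cos (Real.arccos_nonneg s)
    (Real.arccos_le_pi_div_two.2 h0)
  rwa [Real.cos_arccos (by linarith) h1] at h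

/-- **Comparison of the Fisher–Rao and total variation distances** (item 7 of the
Proposition in Appendix B): for a probability measure `λ`,
`d_TV ≤ d_F ≤ √(π·d_TV)`. -/
theorem tv_le_fisherRao_le
    {X : Type*} [MeasurableSpace X] (lam : Measure X) [IsProbabilityMeasure lam]
    (ρ₀ ρ₁ : X → ℝ) (h₀ : IsDensity lam ρ₀) (h₁ : IsDensity lam ρ₁) :
    tvDist lam ρ₀ ρ₁ ≤ fisherRaoDist lam ρ₀ ρ₁ ∧
    fisherRaoDist lam ρ₀ ρ₁ ≤ Real.sqrt (π * tvDist lam ρ₀ ρ₁) := by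
  obtain ⟨hm0, hn0, hi0⟩ := h₀
  obtain ⟨hm1, hn1, hi1⟩ := h₁
  -- integrability of the densities
  have hι0 : Integrable ρ₀ lam := by
    by_contra h; rw [integral_undef h] at hi0; norm_num at hi0
  have hι1 : Integrable ρ₁ lam := by
    by_contra h; rw [integral_undef h] at hi1; norm_num at hi1
  set a : X → ℝ := fun x => Real.sqrt (ρ₀ x) with ha
  set b : X → ℝ := fun x => Real.sqrt (ρ₁ x) with hb
  have ha2 : ∀ x, a x ^ 2 = ρ₀ x := fun x => Real.sq_sqrt (hn0 x)
  have hb2 : ∀ x, b x ^ 2 = ρ₁ x := fun x => Real.sq_sqrt (hn1 x)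
  have han : ∀ x, 0 ≤ a x := fun x => Real.sqrt_nonneg _
  have hbn : ∀ x, 0 ≤ b x := fun x => Real.sqrt_nonneg _
  have hab : ∀ x, Real.sqrt (ρ₀ x * ρ₁ x) = a x * b x := fun x =>
    Real.sqrt_mul (hn0 x) _
  set s : ℝ := ∫ x, Real.sqrt (ρ₀ x * ρ₁ x) ∂lam with hs
  -- integrability of √(ρ₀ρ₁)
  have hmab : Measurable fun x => Real.sqrt (ρ₀ x * ρ₁ x) :=
    (hm0.mul hm1).sqrt
  have hsum : Integrable (fun x => ρ₀ x + ρ₁ x) lam := hι0.add hι1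
  have habd : ∀ x, Real.sqrt (ρ₀ x * ρ₁ x) ≤ (ρ₀ x + ρ₁ x) / 2 := by
    intro x
    rw [hab]
    nlinarith [sq_nonneg (a x - b x), ha2 x, hb2 x, han x, hbn x, sq_nonneg (a x + b x)]
  have hιab : Integrable (fun x => Real.sqrt (ρ₀ x * ρ₁ x)) lam := by
    refine hsum.mono hmab.aestronglyMeasurable ?_
    filter_upwards with x
    rw [Real.norm_of_nonneg (Real.sqrt_nonneg _),
      Real.norm_of_nonneg (by linarith [hn0 x, hn1 x] : (0:ℝ) ≤ ρ₀ x + ρ₁ x)]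
    linarith [habd x, hn0 x, hn1 x]
  -- bounds on s
  have hs0 : 0 ≤ s := integral_nonneg fun x => Real.sqrt_nonneg _
  have hs1 : s ≤ 1 := by
    have : s ≤ ∫ x, (ρ₀ x + ρ₁ x) / 2 ∂lam := by
      refine integral_mono hιab (hsum.div_const 2) fun x => ?_
      exact habd x
    rw [integral_div, integral_add hι0 hι1, hi0, hi1] at this
    linarith
  -- integrals of squares
  have hfsq : ∀ x, (a x - b x) ^ 2 = ρ₀ x + ρ₁ x - 2 * Real.sqrt (ρ₀ x * ρ₁ x) := by
    intro x; rw [hab]; nlinarith [ha2 x, hb2 x]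
  have hgsq : ∀ x, (a x + b x) ^ 2 = ρ₀ x + ρ₁ x + 2 * Real.sqrt (ρ₀ x * ρ₁ x) := by
    intro x; rw [hab]; nlinarith [ha2 x, hb2 x]
  have hιf2 : Integrable (fun x => (a x - b x) ^ 2) lam := by
    have : Integrable (fun x => ρ₀ x + ρ₁ x - 2 * Real.sqrt (ρ₀ x * ρ₁ x)) lam :=
      hsum.sub (hιab.const_mul 2)
    exact this.congr (by filter_upwards with x using (hfsq x).symm)
  have hιg2 : Integrable (fun x => (a x + b x) ^ 2) lam := by
    have : Integrable (fun x => ρ₀ x + ρ₁ x + 2 * Real.sqrt (ρ₀ x * ρ₁ x)) lam :=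
      hsum.add (hιab.const_mul 2)
    exact this.congr (by filter_upwards with x using (hgsq x).symm)
  have hIf2 : ∫ x, (a x - b x) ^ 2 ∂lam = 2 - 2 * s := by
    rw [integral_congr_ae (by filter_upwards with x using hfsq x)]
    rw [integral_sub hsum (hιab.const_mul 2), integral_add hι0 hι1,
      integral_const_mul, hi0, hi1, ← hs]; ring
  have hIg2 : ∫ x, (a x + b x) ^ 2 ∂lam = 2 + 2 * s := by
    rw [integral_congr_ae (by filter_upwards with x using hgsq x)]
    rw [integral_add hsum (hιab.const_mul 2), integral_add hι0 hι1,
      integral_const_mul, hi0, hi1, ← hs]; ring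
  -- |ρ₀ - ρ₁| = |a - b| * (a + b)
  have habs : ∀ x, |ρ₀ x - ρ₁ x| = |a x - b x| * (a x + b x) := by
    intro x
    rw [← abs_of_nonneg (by linarith [han x, hbn x] : 0 ≤ a x + b x), ← abs_mul]
    congr 1
    nlinarith [ha2 x, hb2 x]
  have hιabs : Integrable (fun x => |ρ₀ x - ρ₁ x|) lam := (hι0.sub hι1).abs
  set T : ℝ := ∫ x, |ρ₀ x - ρ₁ x| ∂lam with hT
  have hT0 : 0 ≤ T := integral_nonneg fun x => abs_nonneg _
  -- Fact B : 2 - 2 s ≤ T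
  have hfactB : 2 - 2 * s ≤ T := by
    rw [← hIf2]
    refine integral_mono hιf2 hιabs fun x => ?_
    dsimp
    rw [habs x]
    have h1 : |a x - b x| ≤ a x + b x := by
      rcases abs_cases (a x - b x) with ⟨h, _⟩ | ⟨h, _⟩ <;>
        rw [h] <;> [skip; skip] <;> linarith [han x, hbn x]
    calc (a x - b x) ^ 2 = |a x - b x| * |a x - b x| := by
          rw [abs_mul_abs_self]; ring
      _ ≤ |a x - b x| * (a x + b x) :=
          mul_le_mul_of_nonneg_left h1 (abs_nonneg _)
  -- Fact A (Cauchy–Schwarz) : T ≤ 2 √(1 - s²)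
  have hfactA : T ≤ 2 * Real.sqrt (1 - s ^ 2) := by
    have hpq : Real.HolderConjugate 2 2 := Real.HolderConjugate.two_two
    have hms : Measurable a := hm0.sqrt
    have hms' : Measurable b := hm1.sqrt
    have hmf : AEStronglyMeasurable (fun x => |a x - b x|) lam :=
      ((hms.sub hms').abs).aestronglyMeasurable
    have hmg : AEStronglyMeasurable (fun x => a x + b x) lam :=
      (hms.add hms').aestronglyMeasurable
    have two_eq : (ENNReal.ofReal 2) = 2 := by norm_num [ENNReal.ofReal_ofNat]
    have hLf : MemLp (fun x => |a x - b x|) (ENNReal.ofReal 2) lam := by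
      rw [two_eq, memLp_two_iff_integrable_sq hmf]
      exact hιf2.congr (by filter_upwards with x using by rw [sq_abs])
    have hLg : MemLp (fun x => a x + b x) (ENNReal.ofReal 2) lam := by
      rw [two_eq, memLp_two_iff_integrable_sq hmg]
      exact hιg2
    have hCS := integral_mul_le_Lp_mul_Lq_of_nonneg hpq
      (f := fun x => |a x - b x|) (g := fun x => a x + b x)
      (Filter.Eventually.of_forall fun x => by
        simp only [Pi.zero_apply]; exact abs_nonneg _)
      (Filter.Eventually.of_forall fun x => by
        simp only [Pi.zero_apply]; exact add_nonneg (han x) (hbn x)) hLf hLg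
    have hint_eq : ∫ x, |a x - b x| * (a x + b x) ∂lam = T := by
      rw [hT]
      exact integral_congr_ae (by filter_upwards with x using (habs x).symm)
    have hrw1 : ∫ x, |a x - b x| ^ (2:ℝ) ∂lam = 2 - 2 * s := by
      rw [← hIf2]
      refine integral_congr_ae (Filter.Eventually.of_forall fun x => ?_)
      simp only [Real.rpow_two, sq_abs]
    have hrw2 : ∫ x, (a x + b x) ^ (2:ℝ) ∂lam = 2 + 2 * s := by
      rw [← hIg2]
      refine integral_congr_ae (Filter.Eventually.of_forall fun x => ?_)
      simp only [Real.rpow_two]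
    rw [hint_eq, hrw1, hrw2] at hCS
    have h2s0 : (0:ℝ) ≤ 2 - 2 * s := by linarith
    have h2s0' : (0:ℝ) ≤ 2 + 2 * s := by linarith
    calc T ≤ (2 - 2*s) ^ (1/2 : ℝ) * (2 + 2*s) ^ (1/2 : ℝ) := hCS
      _ = Real.sqrt (2 - 2*s) * Real.sqrt (2 + 2*s) := by
          rw [Real.sqrt_eq_rpow, Real.sqrt_eq_rpow]
      _ = Real.sqrt ((2 - 2*s) * (2 + 2*s)) := (Real.sqrt_mul h2s0 _).symm
      _ = Real.sqrt (4 * (1 - s^2)) := by ring_nf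
      _ = Real.sqrt 4 * Real.sqrt (1 - s^2) := Real.sqrt_mul (by norm_num) _
      _ = 2 * Real.sqrt (1 - s^2) := by
          rw [show (4:ℝ) = 2^2 by norm_num, Real.sqrt_sq (by norm_num)]
  -- assemble
  have hθ : fisherRaoDist lam ρ₀ ρ₁ = Real.arccos s := rfl
  have hTV : tvDist lam ρ₀ ρ₁ = (1/2) * T := rfl
  constructor
  · -- TV ≤ arccos s
    rw [hθ, hTV]
    have h1 : (1/2) * T ≤ Real.sqrt (1 - s^2) := by linarith
    have h2 : Real.sqrt (1 - s^2) = Real.sin (Real.arccos s) := (Real.sin_arccos s).symm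
    have h3 : Real.sin (Real.arccos s) ≤ Real.arccos s :=
      Real.sin_le (Real.arccos_nonneg s)
    linarith [h2 ▸ h1]
  · -- arccos s ≤ √(π TV)
    rw [hθ, hTV]
    have hkey := arccos_sq_le_pi_mul hs0 hs1
    have hπ : 0 < π := Real.pi_pos
    have h1 : Real.arccos s ^ 2 ≤ π * ((1/2) * T) := by
      have : 1 - s ≤ (1/2) * T := by linarith
      nlinarith
    calc Real.arccos s = Real.sqrt (Real.arccos s ^ 2) :=
          (Real.sqrt_sq (Real.arccos_nonneg s)).symm
      _ ≤ Real.sqrt (π * ((1/2) * T)) := Real.sqrt_le_sqrt h1
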